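/- Let S be a topological monoid with open shifts. Then S is quasiregular, i.e., the semiregularization S_sr is a T₃ (regular) space: for every regular open set U in S and every x ∈ U, there is a regular open set W with x ∈ W and Cl(W) ⊆ U (closure in S_sr). -/

import Mathlib

open Topology


/-- The semiregularization topology: generated by the regular open sets. -/
def srTop (X : Type*) [TopologicalSpace X] : TopologicalSpace X :=
  TopologicalSpace.generateFrom {U : Set X | interior (closure U) = U}

private lemma regOpen_intCl {X : Type*} [TopologicalSpace X] {s : Set X} (_hs : IsOpen s) :
    interior (closure (interior (closure s))) = interior (closure s) := by
  apply subset_antisymm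
  · exact interior_mono (closure_minimal interior_subset isClosed_closure)
  · exact interior_maximal subset_closure isOpen_interior

/-- sr-closure of an open set is contained in its ordinary closure. -/
private lemma srClosure_subset {X : Type*} [TopologicalSpace X] {W : Set X} (hW : IsOpen W) :
    @closure X (srTop X) W ⊆ closure W := by
  intro y hy
  by_contra hyn
  obtain ⟨G, hGopen, hyG, hGW⟩ :
      ∃ G : Set X, IsOpen G ∧ y ∈ G ∧ G ∩ closure W = ∅ := by
    refine ⟨(closure W)ᶜ, isClosed_closure.isOpen_compl, hyn, ?_⟩
    simp
  set G' := interior (closure G) with hG'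
  have hG'sr : IsOpen[srTop X] G' :=
    TopologicalSpace.GenerateOpen.basic G' (regOpen_intCl hGopen)
  have hyG' : y ∈ G' := interior_maximal subset_closure hGopen hyG
  have hWG : W ∩ G = ∅ := by
    rw [Set.eq_empty_iff_forall_notMem]
    rintro z ⟨hzW, hzG⟩
    exact Set.eq_empty_iff_forall_notMem.mp hGW z ⟨hzG, subset_closure hzW⟩
  have hclGW : closure G ∩ W = ∅ := by
    rw [Set.eq_empty_iff_forall_notMem]
    rintro z ⟨hzG, hzW⟩
    have : G ⊆ Wᶜ := fun a haG haW =>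
      Set.eq_empty_iff_forall_notMem.mp hWG a ⟨haW, haG⟩
    exact (closure_minimal this (hW.isClosed_compl)) hzG hzW
  have := (@mem_closure_iff X (srTop X) _ _).mp hy G' hG'sr hyG'
  obtain ⟨z, hzG', hzW⟩ := this
  exact Set.eq_empty_iff_forall_notMem.mp hclGW z ⟨closure_mono (by exact subset_rfl) (interior_subset hzG'), hzW⟩

theorem stmt_7 {S : Type*} [Monoid S] [TopologicalSpace S]
    (hmul : Continuous fun p : S × S => p.1 * p.2)
    (hshift : ∀ a : S, IsOpenMap (fun x => a * x) ∧ IsOpenMap (fun x => x * a)) :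
    ∀ U : Set S, interior (closure U) = U → ∀ x ∈ U,
      ∃ W : Set S, interior (closure W) = W ∧ x ∈ W ∧ @closure S (srTop S) W ⊆ U := by
  haveI : ContinuousMul S := ⟨hmul⟩
  intro U hU x hx
  have hUopen : IsOpen U := hU ▸ isOpen_interior
  -- find open V ∋ 1 with x*V*V ⊆ U
  have hc : Continuous fun p : S × S => x * p.1 * p.2 := by continuity
  have hpre : IsOpen ((fun p : S × S => x * p.1 * p.2) ⁻¹' U) := hUopen.preimage hc
  have hmem : ((1 : S), (1 : S)) ∈ (fun p : S × S => x * p.1 * p.2) ⁻¹' U := by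
    simp [hx]
  obtain ⟨V1, V2, hV1o, hV2o, h1V1, h1V2, hsub⟩ :=
    isOpen_prod_iff.mp hpre 1 1 hmem
  set V := V1 ∩ V2 with hV
  have hVo : IsOpen V := hV1o.inter hV2o
  have h1V : (1 : S) ∈ V := ⟨h1V1, h1V2⟩
  have hVU : ∀ a ∈ V, ∀ b ∈ V, x * a * b ∈ U := fun a ha b hb =>
    hsub (Set.mk_mem_prod ha.1 hb.2)
  set A := (fun v => x * v) '' V with hA
  have hAopen : IsOpen A := (hshift x).1 V hVo
  have hxA : x ∈ A := ⟨1, h1V, mul_one x⟩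
  -- key: closure A ⊆ U
  have hclA : closure A ⊆ U := by
    intro y hy
    have hyV : ∀ v ∈ V, y * v ∈ closure U := by
      intro v hv
      rw [mem_closure_iff]
      intro G hGo hyvG
      have hT : IsOpen ((fun z => z * v) ⁻¹' G) :=
        hGo.preimage (continuous_mul_right v)
      have hyT : y ∈ (fun z => z * v) ⁻¹' G := hyvG
      obtain ⟨z, hzT, hzA⟩ := mem_closure_iff.mp hy _ hT hyT
      obtain ⟨a, haV, rfl⟩ := hzA
      exact ⟨x * a * v, hzT, hVU a haV v hv⟩
    have hyVsub : (fun v => y * v) '' V ⊆ closure U := by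
      rintro _ ⟨v, hv, rfl⟩; exact hyV v hv
    have hyVopen : IsOpen ((fun v => y * v) '' V) := (hshift y).1 V hVo
    exact hU ▸ (interior_maximal hyVsub hyVopen ⟨1, h1V, mul_one y⟩ : y ∈ interior (closure U))
  refine ⟨interior (closure A), regOpen_intCl hAopen, interior_maximal subset_closure hAopen hxA, ?_⟩
  have h1 : @closure S (srTop S) (interior (closure A)) ⊆ closure (interior (closure A)) :=
    srClosure_subset isOpen_interior
  have h2 : closure (interior (closure A)) ⊆ closure A :=
    closure_minimal interior_subset isClosed_closure
  exact fun z hz => hclA (h2 (h1 hz))
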